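/- arXiv:2105.14747 — 2 statements merged into one kernel-verified Lean document; each statement's English description precedes it below -/
import Mathlib

section
/- Let Ẑ_K ∈ ℝ^{K×L}, Ẑ_{K^c} ∈ ℝ^{(N-K)×L}, and x_K ∈ ℝ^K with x_K ≠ 0. Then the problem of minimizing ‖Ẑ_K − x_K hᵀ‖_F² + ‖Ẑ_{K^c} − x_{K^c} hᵀ‖_F² jointly over h ∈ ℝ^L and x_{K^c} ∈ ℝ^{N-K} is equivalent (after eliminating x_{K^c}) to maximizing over unit vectors ȟ the quadratic form ȟᵀ ( Ẑ_{K^c}ᵀ Ẑ_{K^c} + (1/‖x_K‖²) Ẑ_Kᵀ x_K x_Kᵀ Ẑ_K ) ȟ, and the optimum h is ĥ = (ȟᵀ Ẑ_Kᵀ x_K / ‖x_K‖²) ȟ where ȟ is a unit principal eigenvector of that matrix. -/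
open Matrix BigOperators Finset

lemma sum_sq_expand {m n : ℕ} (Z : Matrix (Fin m) (Fin n) ℝ) (x : Fin m → ℝ) (h : Fin n → ℝ) :
    ∑ i, ∑ j, (Z i j - x i * h j) ^ 2 =
      (∑ i, ∑ j, Z i j ^ 2) - 2 * (x ⬝ᵥ Z.mulVec h) + (∑ i, x i ^ 2) * (∑ j, h j ^ 2) := by
  simp only [dotProduct, mulVec, sub_sq, Finset.mul_sum, Finset.sum_mul,
    Finset.sum_add_distrib, Finset.sum_sub_distrib]
  congr 1
  · congr 1
    · exact Finset.sum_congr rfl fun i _ => Finset.sum_congr rfl fun j _ => by ring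
  · rw [Finset.sum_comm]
    refine Finset.sum_congr rfl fun j _ => Finset.sum_congr rfl fun i _ => by ring

lemma quad_form {NK L : ℕ} (Zc : Matrix (Fin NK) (Fin L) ℝ) (a : Fin L → ℝ) (k : ℝ)
    (v : Fin L → ℝ) :
    v ⬝ᵥ (Zcᵀ * Zc + k⁻¹ • Matrix.vecMulVec a a).mulVec v =
      (∑ i, (Zc.mulVec v i) ^ 2) + k⁻¹ * (a ⬝ᵥ v) ^ 2 := by
  rw [add_mulVec, dotProduct_add, smul_mulVec, dotProduct_smul]
  congr 1
  · rw [← Matrix.mulVec_mulVec, Matrix.dotProduct_mulVec, Matrix.vecMul_transpose]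
    simp [dotProduct, sq]
  · rw [smul_eq_mul]
    congr 1
    simp only [vecMulVec_apply, mulVec, dotProduct]
    rw [sq, Finset.sum_mul]
    refine Finset.sum_congr rfl fun i _ => ?_
    rw [Finset.mul_sum, Finset.mul_sum]
    exact Finset.sum_congr rfl fun j _ => by ring

lemma amgm_aux (x y S : ℝ) (hS : 0 < S) : 2 * (x * y) - x ^ 2 * S ≤ y ^ 2 / S := by
  rw [le_div_iff₀ hS]
  nlinarith [sq_nonneg (y - x * S)]

lemma amgm_aux2 (e S : ℝ) (hS : 0 < S) : 2 * e - S ≤ e ^ 2 / S := by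
  rw [le_div_iff₀ hS]
  nlinarith [sq_nonneg (e - S)]

theorem stmt_7 {K NK L : ℕ}
    (ZK : Matrix (Fin K) (Fin L) ℝ) (Zc : Matrix (Fin NK) (Fin L) ℝ)
    (xK : Fin K → ℝ) (hxK : xK ≠ 0)
    -- the matrix  Ẑ_{K^c}ᵀ Ẑ_{K^c} + (1/‖x_K‖²) Ẑ_Kᵀ x_K x_Kᵀ Ẑ_K
    (A : Matrix (Fin L) (Fin L) ℝ)
    (hA : A = Zcᵀ * Zc +
        (∑ i, xK i ^ 2)⁻¹ • Matrix.vecMulVec (ZKᵀ.mulVec xK) (ZKᵀ.mulVec xK))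
    -- ȟ is a unit principal eigenvector of A (maximizer of the quadratic form
    -- over unit vectors)
    (hv : Fin L → ℝ) (hunit : ∑ j, hv j ^ 2 = 1)
    (hprin : ∀ v : Fin L → ℝ, ∑ j, v j ^ 2 = 1 →
        v ⬝ᵥ A.mulVec v ≤ hv ⬝ᵥ A.mulVec hv)
    -- the optimal coefficients  ĥ = (ȟᵀ Ẑ_Kᵀ x_K / ‖x_K‖²) ȟ   and
    -- x̂_{K^c} = Ẑ_{K^c} ĥ / ‖ĥ‖²
    (hopt : Fin L → ℝ)
    (hhopt : hopt = ((hv ⬝ᵥ ZKᵀ.mulVec xK) / ∑ i, xK i ^ 2) • hv)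
    (hne : hopt ≠ 0)
    (xc : Fin NK → ℝ) (hxc : xc = fun i => Zc.mulVec hopt i / ∑ j, hopt j ^ 2) :
    -- (ĥ, x̂_{K^c}) jointly minimizes ‖Ẑ_K − x_K hᵀ‖_F² + ‖Ẑ_{K^c} − x_{K^c} hᵀ‖_F²,
    -- and the minimum value equals ‖Ẑ_K‖_F² + ‖Ẑ_{K^c}‖_F² − ȟᵀ A ȟ
    (∀ (h : Fin L → ℝ) (z : Fin NK → ℝ),
        (∑ i, ∑ j, (ZK i j - xK i * hopt j) ^ 2) +
          (∑ i, ∑ j, (Zc i j - xc i * hopt j) ^ 2) ≤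
        (∑ i, ∑ j, (ZK i j - xK i * h j) ^ 2) +
          (∑ i, ∑ j, (Zc i j - z i * h j) ^ 2)) ∧
    ((∑ i, ∑ j, (ZK i j - xK i * hopt j) ^ 2) +
        (∑ i, ∑ j, (Zc i j - xc i * hopt j) ^ 2) =
      (∑ i, ∑ j, ZK i j ^ 2) + (∑ i, ∑ j, Zc i j ^ 2) - hv ⬝ᵥ A.mulVec hv) := by
  set k : ℝ := ∑ i, xK i ^ 2 with hkdef
  set a : Fin L → ℝ := ZKᵀ.mulVec xK with hadef
  have hk : 0 < k := by
    rcases Function.ne_iff.1 hxK with ⟨i0, hi0⟩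
    refine Finset.sum_pos' (fun i _ => sq_nonneg _) ⟨i0, Finset.mem_univ _, ?_⟩
    have : xK i0 ≠ 0 := hi0
    positivity
  have hk0 : k ≠ 0 := hk.ne'
  have hA' : ∀ v : Fin L → ℝ, v ⬝ᵥ A.mulVec v =
      (∑ i, (Zc.mulVec v i) ^ 2) + k⁻¹ * (a ⬝ᵥ v) ^ 2 := by
    intro v; rw [hA]; exact quad_form Zc a k v
  have hdot : ∀ h : Fin L → ℝ, xK ⬝ᵥ ZK.mulVec h = a ⬝ᵥ h := by
    intro h
    rw [Matrix.dotProduct_mulVec, hadef, Matrix.mulVec_transpose]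
  -- the scalar t
  set d : ℝ := a ⬝ᵥ hv with hddef
  have hhd : hv ⬝ᵥ ZKᵀ.mulVec xK = d := by
    rw [hddef, dotProduct_comm]
  set t : ℝ := d / k with htdef
  have hhopt' : hopt = t • hv := by rw [hhopt, hhd]
  have ht0 : t ≠ 0 := by
    intro h0
    apply hne
    rw [hhopt', h0, zero_smul]
  have hd0 : d ≠ 0 := fun h0 => ht0 (by rw [htdef, h0, zero_div])
  -- basic computations with hopt
  have hSopt : ∑ j, hopt j ^ 2 = t ^ 2 := by
    simp only [hhopt', Pi.smul_apply, smul_eq_mul, mul_pow, ← Finset.mul_sum, hunit, mul_one]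
  have hmv : Zc.mulVec hopt = t • Zc.mulVec hv := by
    rw [hhopt', Matrix.mulVec_smul]
  set W : ℝ := ∑ i, (Zc.mulVec hv i) ^ 2 with hWdef
  have hxc' : ∀ i, xc i = Zc.mulVec hv i / t := by
    intro i
    rw [hxc]
    simp only [hSopt, hmv, Pi.smul_apply, smul_eq_mul]
    field_simp
  have hP : xc ⬝ᵥ Zc.mulVec hopt = W := by
    simp only [dotProduct, hmv, Pi.smul_apply, smul_eq_mul, hWdef]
    refine Finset.sum_congr rfl fun i _ => ?_
    rw [hxc' i]
    field_simp
  have hSxc : ∑ i, xc i ^ 2 = W / t ^ 2 := by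
    rw [hWdef, Finset.sum_div]
    refine Finset.sum_congr rfl fun i _ => ?_
    rw [hxc' i, div_pow]
  have hadopt : a ⬝ᵥ hopt = t * d := by
    rw [hhopt', dotProduct_smul, smul_eq_mul, hddef]
  -- the claimed optimal value
  have heq : (∑ i, ∑ j, (ZK i j - xK i * hopt j) ^ 2) +
        (∑ i, ∑ j, (Zc i j - xc i * hopt j) ^ 2) =
      (∑ i, ∑ j, ZK i j ^ 2) + (∑ i, ∑ j, Zc i j ^ 2) - hv ⬝ᵥ A.mulVec hv := by
    rw [sum_sq_expand ZK xK hopt, sum_sq_expand Zc xc hopt, hdot, hA' hv,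
      hadopt, hP, hSopt, hSxc, ← hkdef, ← hddef, ← hWdef, htdef]
    field_simp [hd0]
    ring
  refine ⟨fun h z => ?_, heq⟩
  rw [heq, sum_sq_expand ZK xK h, sum_sq_expand Zc z h, hdot, hA' hv, ← hkdef,
    ← hddef, ← hWdef]
  set S : ℝ := ∑ j, h j ^ 2 with hSdef
  set Sz : ℝ := ∑ i, z i ^ 2 with hSzdef
  set e : ℝ := a ⬝ᵥ h with hedef
  set P : ℝ := z ⬝ᵥ Zc.mulVec h with hPdef
  set Wh : ℝ := ∑ i, (Zc.mulVec h i) ^ 2 with hWhdef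
  have hQnn : 0 ≤ W + k⁻¹ * d ^ 2 := by
    have h1 : 0 ≤ W := Finset.sum_nonneg fun i _ => sq_nonneg _
    have h2 : 0 ≤ k⁻¹ * d ^ 2 := by positivity
    linarith
  rcases eq_or_lt_of_le (Finset.sum_nonneg (fun j (_ : j ∈ Finset.univ) => sq_nonneg (h j)) :
      (0:ℝ) ≤ S) with hS0 | hS
  · -- h = 0 case
    have h0 : h = 0 := by
      funext j
      have := (Finset.sum_eq_zero_iff_of_nonneg (fun j _ => sq_nonneg (h j))).1 hS0.symm
        j (Finset.mem_univ j)
      exact pow_eq_zero_iff two_ne_zero |>.1 this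
    have he0 : e = 0 := by simp [hedef, h0]
    have hP0 : P = 0 := by simp [hPdef, h0]
    have hSz0 : 0 ≤ Sz := Finset.sum_nonneg fun i _ => sq_nonneg _
    have hS0' : S = 0 := hS0.symm
    rw [he0, hP0, hS0']
    nlinarith
  · -- h ≠ 0 case
    have hkS : 0 < k * S := mul_pos hk hS
    have ineq1 : 2 * e - k * S ≤ e ^ 2 / (k * S) := amgm_aux2 e (k * S) hkS
    have ineq2 : 2 * P - Sz * S ≤ Wh / S := by
      have hterm : ∀ i, 2 * (z i * Zc.mulVec h i) - z i ^ 2 * S ≤ (Zc.mulVec h i) ^ 2 / S :=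
        fun i => amgm_aux (z i) (Zc.mulVec h i) S hS
      calc 2 * P - Sz * S = ∑ i, (2 * (z i * Zc.mulVec h i) - z i ^ 2 * S) := by
            rw [Finset.sum_sub_distrib, ← Finset.mul_sum, ← Finset.sum_mul, hPdef, hSzdef,
              dotProduct]
        _ ≤ ∑ i, (Zc.mulVec h i) ^ 2 / S := Finset.sum_le_sum fun i _ => hterm i
        _ = Wh / S := by rw [← Finset.sum_div]
    -- principal eigenvector inequality applied to normalized h
    have ineq3 : Wh + k⁻¹ * e ^ 2 ≤ (W + k⁻¹ * d ^ 2) * S := by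
      set s : ℝ := Real.sqrt S with hsdef
      have hs : s ^ 2 = S := Real.sq_sqrt hS.le
      have hspos : 0 < s := Real.sqrt_pos.2 hS
      have hs0 : s ≠ 0 := hspos.ne'
      have hu : ∑ j, ((s⁻¹ • h) j) ^ 2 = 1 := by
        simp only [Pi.smul_apply, smul_eq_mul, mul_pow, ← Finset.mul_sum, ← hSdef, ← hs]
        field_simp
      have hle := hprin (s⁻¹ • h) hu
      rw [hA' (s⁻¹ • h), hA' hv, ← hddef, ← hWdef] at hle
      have h1 : ∑ i, (Zc.mulVec (s⁻¹ • h) i) ^ 2 = Wh / S := by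
        rw [Matrix.mulVec_smul, hWhdef, ← hs]
        simp only [Pi.smul_apply, smul_eq_mul, mul_pow, ← Finset.mul_sum]
        field_simp
      have h2 : a ⬝ᵥ (s⁻¹ • h) = s⁻¹ * e := by
        rw [dotProduct_smul, smul_eq_mul, hedef]
      rw [h1, h2] at hle
      have h3 : (s⁻¹ * e) ^ 2 = e ^ 2 / S := by
        rw [mul_pow, ← hs]
        field_simp
      rw [h3] at hle
      have h4 : Wh / S + k⁻¹ * (e ^ 2 / S) = (Wh + k⁻¹ * e ^ 2) / S := by
        field_simp
      rw [h4, div_le_iff₀ hS] at hle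
      exact hle
    have hsum : e ^ 2 / (k * S) + Wh / S ≤ W + k⁻¹ * d ^ 2 := by
      have hid : e ^ 2 / (k * S) + Wh / S = (Wh + k⁻¹ * e ^ 2) / S := by
        field_simp
        ring
      rw [hid, div_le_iff₀ hS]
      linarith
    linarith
end

section
/- For a matrix Z ∈ ℝ^{N×L} with N ≠ L (or in general rectangular), rank(Z) ≤ r if and only if there exist symmetric matrices Θ₁ ∈ ℝ^{N×N} and Θ₂ ∈ ℝ^{L×L} with rank(Θ₁) + rank(Θ₂) ≤ 2r such that the block matrix [[Θ₁, Z],[Zᵀ, Θ₂]] is positive semidefinite (semidefinite embedding lemma). -/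
open Matrix BigOperators

lemma stmt_14_factor {N L : ℕ} (Z : Matrix (Fin N) (Fin L) ℝ) :
    ∃ (A : Matrix (Fin N) (Fin Z.rank) ℝ) (B : Matrix (Fin Z.rank) (Fin L) ℝ),
      Z = A * B := by
  let b : Module.Basis (Fin Z.rank) ℝ (LinearMap.range Z.mulVecLin) := Module.finBasis ℝ _
  let A : Matrix (Fin N) (Fin Z.rank) ℝ := fun i j => (b j : Fin N → ℝ) i
  let v : Fin L → LinearMap.range Z.mulVecLin := fun l =>
    ⟨Z *ᵥ Pi.single l 1, ⟨Pi.single l 1, rfl⟩⟩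
  let B : Matrix (Fin Z.rank) (Fin L) ℝ := fun j l => b.repr (v l) j
  refine ⟨A, B, ?_⟩
  ext i l
  have hv : (v l : Fin N → ℝ) i = Z i l := by
    simp [v, Matrix.mulVec_single]
  have hs := b.sum_repr (v l)
  calc Z i l = (v l : Fin N → ℝ) i := hv.symm
    _ = ((∑ j, b.repr (v l) j • (b j : LinearMap.range Z.mulVecLin)) :
          LinearMap.range Z.mulVecLin).val i := by rw [hs]
    _ = ∑ j, b.repr (v l) j * (b j : Fin N → ℝ) i := by
        simp only [Submodule.coe_sum, Finset.sum_apply, Submodule.coe_smul, Pi.smul_apply, smul_eq_mul]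
    _ = (A * B) i l := by
        rw [Matrix.mul_apply]; simp [Matrix.mul_apply, A, B, mul_comm]

theorem stmt_14 {N L : ℕ} (Z : Matrix (Fin N) (Fin L) ℝ) (r : ℕ) :
    Z.rank ≤ r ↔
      ∃ (Θ₁ : Matrix (Fin N) (Fin N) ℝ) (Θ₂ : Matrix (Fin L) (Fin L) ℝ),
        Θ₁.IsSymm ∧ Θ₂.IsSymm ∧ Θ₁.rank + Θ₂.rank ≤ 2 * r ∧
        (Matrix.fromBlocks Θ₁ Z Zᵀ Θ₂).PosSemidef := by
  constructor
  · intro hr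
    obtain ⟨A, B, hZ⟩ := stmt_14_factor Z
    refine ⟨A * Aᵀ, Bᵀ * B, ?_, ?_, ?_, ?_⟩
    · simp [Matrix.IsSymm, Matrix.transpose_mul]
    · simp [Matrix.IsSymm, Matrix.transpose_mul]
    · have h1 : (A * Aᵀ).rank ≤ Z.rank :=
        (Matrix.rank_mul_le_left A Aᵀ).trans (Matrix.rank_le_width A)
      have h2 : (Bᵀ * B).rank ≤ Z.rank :=
        (Matrix.rank_mul_le_right Bᵀ B).trans (Matrix.rank_le_height B)
      omega
    · let M : Matrix (Fin Z.rank) (Fin N ⊕ Fin L) ℝ := fun j s =>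
        Sum.elim (fun i => A i j) (fun l => B j l) s
      have hM : Matrix.fromBlocks (A * Aᵀ) Z Zᵀ (Bᵀ * B) = Mᴴ * M := by
        ext s t
        cases s <;> cases t <;>
          rw [Matrix.mul_apply] <;> simp only [Matrix.conjTranspose_apply] <;> simp [hZ, M, Matrix.mul_apply, Matrix.fromBlocks, mul_comm]
      rw [hM]
      exact Matrix.posSemidef_conjTranspose_mul_self M
  · rintro ⟨Θ₁, Θ₂, hs1, hs2, hrk, hpsd⟩
    obtain ⟨S, hS⟩ := (by open scoped MatrixOrder in exact CStarAlgebra.nonneg_iff_eq_star_mul_self.mp hpsd.nonneg)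
    let S₁ : Matrix (Fin N ⊕ Fin L) (Fin N) ℝ := S.submatrix id Sum.inl
    let S₂ : Matrix (Fin N ⊕ Fin L) (Fin L) ℝ := S.submatrix id Sum.inr
    have hZ : Z = S₁ᵀ * S₂ := by
      ext i l
      have := congrFun (congrFun hS (Sum.inl i)) (Sum.inr l)
      simpa [Matrix.mul_apply, Matrix.fromBlocks, S₁, S₂] using this
    have hΘ₁ : Θ₁ = S₁ᵀ * S₁ := by
      ext i i'
      have := congrFun (congrFun hS (Sum.inl i)) (Sum.inl i')
      simpa [Matrix.mul_apply, Matrix.fromBlocks, S₁] using this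
    have hΘ₂ : Θ₂ = S₂ᵀ * S₂ := by
      ext l l'
      have := congrFun (congrFun hS (Sum.inr l)) (Sum.inr l')
      simpa [Matrix.mul_apply, Matrix.fromBlocks, S₂] using this
    have h1 : Z.rank ≤ Θ₁.rank := by
      rw [hZ, hΘ₁, Matrix.rank_transpose_mul_self]
      calc (S₁ᵀ * S₂).rank ≤ S₁ᵀ.rank := Matrix.rank_mul_le_left _ _
        _ = S₁.rank := Matrix.rank_transpose S₁
    have h2 : Z.rank ≤ Θ₂.rank := by
      rw [hΘ₂, Matrix.rank_transpose_mul_self, ← Matrix.rank_transpose Z]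
      calc Zᵀ.rank = (S₂ᵀ * S₁).rank := by
            rw [hZ, Matrix.transpose_mul, Matrix.transpose_transpose]
        _ ≤ S₂ᵀ.rank := Matrix.rank_mul_le_left _ _
        _ = S₂.rank := Matrix.rank_transpose S₂
    omega
end
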